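/- For the simple majority game on n = 2m+1 voters, the (non-normalized) Banzhaf index β(n) = C(2m,m)/2^{2m} satisfies β(n) · √n → √(2/π) as m → ∞; in particular β(n) is asymptotically proportional to 1/√n (Penrose's square root law). -/

import Mathlib

open Filter Real

open Stirling Topology

lemma stirling_ratio (m : ℕ) (hm : 1 ≤ m) :
    stirlingSeq (2 * m) / (stirlingSeq m) ^ 2 =
      (Nat.choose (2 * m) m : ℝ) * Real.sqrt m / 2 ^ (2 * m) := by
  have hm0 : (0 : ℝ) < m := by exact_mod_cast hm
  have hfac : ((2 * m).factorial : ℝ) =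
      (Nat.choose (2 * m) m : ℝ) * (m.factorial : ℝ) ^ 2 := by
    have h3 := Nat.choose_mul_factorial_mul_factorial (show m ≤ 2 * m by omega)
    rw [show 2 * m - m = m by omega] at h3
    exact_mod_cast by rw [← h3]; push_cast; ring
  unfold stirlingSeq
  push_cast
  rw [hfac]
  have hf : (0:ℝ) < m.factorial := by exact_mod_cast m.factorial_pos
  have hsm : (0:ℝ) < Real.sqrt m := Real.sqrt_pos.2 hm0
  field_simp
  rw [Real.sq_sqrt (show (0:ℝ) ≤ 2 * m by positivity),
    Real.sqrt_mul (show (0:ℝ) ≤ 2 ^ 2 by norm_num), Real.sqrt_sq (show (0:ℝ) ≤ 2 by norm_num)]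
  have hmm := Real.mul_self_sqrt hm0.le
  linear_combination (-((Nat.choose (2 * m) m : ℝ) * 2 * 2 ^ (2 * m) * ((m / rexp 1) ^ m) ^ 2)) * hmm

/-- Penrose's square root law: the Banzhaf decisiveness probability
`β(2m+1) = C(2m,m)/2^(2m)` of a voter in a simple-majority game on `n = 2m+1`
voters satisfies `β(n) · √n → √(2/π)` as `m → ∞`. -/
theorem penrose_square_root_law :
    Tendsto
      (fun m : ℕ =>
        ((Nat.choose (2 * m) m : ℝ) / 2 ^ (2 * m)) * Real.sqrt (2 * m + 1))
      atTop (nhds (Real.sqrt (2 / Real.pi))) := by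
  have hst := Stirling.tendsto_stirlingSeq_sqrt_pi
  have h1 : Tendsto (fun m : ℕ => stirlingSeq (2 * m)) atTop (𝓝 (Real.sqrt π)) :=
    hst.comp (tendsto_atTop_atTop.mpr fun b => ⟨b, fun a ha => by omega⟩)
  have h2 : Tendsto (fun m : ℕ => (stirlingSeq m) ^ 2) atTop (𝓝 π) := by
    simpa [Real.sq_sqrt Real.pi_pos.le] using hst.pow 2
  have h3 : Tendsto (fun m : ℕ => ((2 * m + 1 : ℝ)) / m) atTop (𝓝 2) := by
    have : Tendsto (fun m : ℕ => (2 : ℝ) + 1 / m) atTop (𝓝 (2 + 0)) :=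
      tendsto_const_nhds.add (tendsto_one_div_atTop_nhds_zero_nat)
    rw [add_zero] at this
    apply this.congr'
    filter_upwards [eventually_ne_atTop 0] with m hm
    have hm0 : (0:ℝ) < m := by positivity
    field_simp
  have h4 : Tendsto (fun m : ℕ => Real.sqrt ((2 * m + 1 : ℝ) / m)) atTop
      (𝓝 (Real.sqrt 2)) := (Real.continuous_sqrt.tendsto 2).comp h3
  have hmain : Tendsto (fun m : ℕ =>
      stirlingSeq (2 * m) / (stirlingSeq m) ^ 2 * Real.sqrt ((2 * m + 1 : ℝ) / m))
      atTop (𝓝 (Real.sqrt π / π * Real.sqrt 2)) :=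
    (h1.div h2 (by positivity)).mul h4
  have hval : Real.sqrt π / π * Real.sqrt 2 = Real.sqrt (2 / π) := by
    have hpi : Real.sqrt π * Real.sqrt π = π := Real.mul_self_sqrt Real.pi_pos.le
    rw [Real.sqrt_div (by norm_num : (0:ℝ) ≤ 2) π]
    rw [div_mul_eq_mul_div, div_eq_div_iff Real.pi_ne_zero (by positivity)]
    linear_combination Real.sqrt 2 * hpi
  rw [← hval]
  apply hmain.congr'
  filter_upwards [eventually_ge_atTop 1] with m hm
  have hm0 : (0:ℝ) < m := by exact_mod_cast hm
  rw [stirling_ratio m hm, Real.sqrt_div (by positivity) _]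
  field_simp
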